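/- Let X ⊆ ℝ^n be a nonempty (possibly unbounded) open set, let F : X × ℝ^M → ℝ be jointly continuous, and let f : X → ℝ be continuous with f(x) ∈ int R_x for every x ∈ X. Then for every x ∈ X there exists δ > 0 such that for every finite subset A ⊂ X ∩ B(x, δ) there exists a smooth function U ∈ C^∞(X) with T(y,D)U(y) = f(y) for all y ∈ A, where B(x, δ) is the open ball of radius δ around x in ℝ^n. -/

import Mathlib

open Set Topology Filter

/-- The partial derivative of `f` in the `i`-th coordinate direction. -/
noncomputable def pder {n : ℕ} (i : Fin n) (f : (Fin n → ℝ) → ℝ) : (Fin n → ℝ) → ℝ :=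
  fun x => fderiv ℝ f x (Pi.single i 1)

/-- The multi-index partial derivative `D^p f` for a multi-index `p : Fin n → ℕ`. -/
noncomputable def mderiv {n : ℕ} (p : Fin n → ℕ) (f : (Fin n → ℝ) → ℝ) : (Fin n → ℝ) → ℝ :=
  (List.finRange n).foldr (fun i g => (pder i)^[p i] g) f

noncomputable def mono {n : ℕ} (c : Fin n → ℝ) (q : Fin n → ℕ) : (Fin n → ℝ) → ℝ :=
  fun x => ∏ j, (x j - c j) ^ q j

lemma mono_contDiff {n : ℕ} (c : Fin n → ℝ) (q : Fin n → ℕ) :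
    ContDiff ℝ (⊤ : ℕ∞) (mono c q) := by
  unfold mono
  apply contDiff_prod
  intro j _
  exact (((ContinuousLinearMap.proj j :
    (Fin n → ℝ) →L[ℝ] ℝ).contDiff).sub contDiff_const).pow (q j)

lemma mono_hasFDerivAt {n : ℕ} (c : Fin n → ℝ) (q : Fin n → ℕ) (x : Fin n → ℝ) :
    HasFDerivAt (mono c q)
      (∑ j, (∏ k ∈ Finset.univ.erase j, (x k - c k) ^ q k) •
        (((q j : ℝ) * (x j - c j) ^ (q j - 1)) •
          (ContinuousLinearMap.proj j : (Fin n → ℝ) →L[ℝ] ℝ))) x := by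
  apply HasFDerivAt.finset_prod
  intro j _
  have h1 : HasDerivAt (fun t : ℝ => (t - c j) ^ q j)
      ((q j : ℝ) * (x j - c j) ^ (q j - 1)) (x j) := by
    simpa using ((hasDerivAt_id (x j)).sub_const (c j)).fun_pow (q j)
  have h2 := h1.comp_hasFDerivAt x
    (ContinuousLinearMap.proj j : (Fin n → ℝ) →L[ℝ] ℝ).hasFDerivAt
  exact h2

lemma pder_mono {n : ℕ} (c : Fin n → ℝ) (q : Fin n → ℕ) (i : Fin n) :
    pder i (mono c q) =
      fun x => (q i : ℝ) * mono c (Function.update q i (q i - 1)) x := by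
  funext x
  have h := (mono_hasFDerivAt c q x).fderiv
  simp only [pder, h]
  rw [ContinuousLinearMap.sum_apply]
  rw [Finset.sum_eq_single i]
  · simp only [ContinuousLinearMap.smul_apply, ContinuousLinearMap.proj_apply,
      Pi.single_eq_same, smul_eq_mul, mul_one]
    have : mono c (Function.update q i (q i - 1)) x
        = (x i - c i) ^ (q i - 1) * ∏ k ∈ Finset.univ.erase i, (x k - c k) ^ q k := by
      rw [mono, ← Finset.mul_prod_erase Finset.univ _ (Finset.mem_univ i)]
      rw [Function.update_self]
      exact congrArg _ (Finset.prod_congr rfl fun k hk =>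
        by rw [Function.update_of_ne (Finset.ne_of_mem_erase hk)])
    rw [this]; ring
  · intro j _ hj
    simp only [ContinuousLinearMap.smul_apply, ContinuousLinearMap.proj_apply,
      smul_eq_mul]
    rw [Pi.single_eq_of_ne hj]
    ring
  · simp

lemma pder_const_mul {n : ℕ} {f : (Fin n → ℝ) → ℝ} (hf : Differentiable ℝ f)
    (a : ℝ) (i : Fin n) :
    pder i (fun x => a * f x) = fun x => a * pder i f x := by
  funext x
  simp only [pder]
  rw [fderiv_const_mul (hf x) a]
  simp

lemma pder_iter_mono {n : ℕ} (c : Fin n → ℝ) (q : Fin n → ℕ) (a : ℝ) (i : Fin n) :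
    ∀ k : ℕ, (pder i)^[k] (fun x => a * mono c q x) =
      fun x => (a * ((q i).descFactorial k : ℝ)) * mono c (Function.update q i (q i - k)) x
  | 0 => by
    simp only [Function.iterate_zero, id_eq, Nat.descFactorial_zero, Nat.cast_one, mul_one,
      Nat.sub_zero, Function.update_eq_self]
  | (k+1) => by
    rw [Function.iterate_succ_apply', pder_iter_mono c q a i k]
    rw [pder_const_mul ((mono_contDiff _ _).differentiable (by simp)) _ i, pder_mono]
    funext x
    rw [Function.update_idem]
    simp only [Function.update_self]
    rw [Nat.sub_sub, Nat.descFactorial_succ]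
    push_cast
    ring

lemma foldr_mono {n : ℕ} (c : Fin n → ℝ) (p : Fin n → ℕ) :
    ∀ (l : List (Fin n)), l.Nodup → ∀ (q : Fin n → ℕ) (a : ℝ),
      l.foldr (fun i g => (pder i)^[p i] g) (fun x => a * mono c q x) =
        fun x => (a * (l.map (fun j => ((q j).descFactorial (p j) : ℝ))).prod) *
          mono c (fun j => if j ∈ l then q j - p j else q j) x
  | [], _, q, a => by
    simp only [List.foldr_nil, List.map_nil, List.prod_nil, mul_one, List.not_mem_nil,
      if_false]
  | (i :: t), hl, q, a => by
    have hit : i ∉ t := (List.nodup_cons.1 hl).1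
    rw [List.foldr_cons, foldr_mono c p t (List.nodup_cons.1 hl).2 q a,
      pder_iter_mono]
    have hqi : (fun j => if j ∈ t then q j - p j else q j) i = q i := by
      simp [hit]
    simp only [if_neg hit]
    have hupd : Function.update (fun j => if j ∈ t then q j - p j else q j) i (q i - p i)
        = fun j => if j ∈ i :: t then q j - p j else q j := by
      funext j
      by_cases hj : j = i
      · subst hj; simp
      · rw [Function.update_of_ne hj]
        simp [List.mem_cons, hj]
    rw [hupd]
    funext x
    simp only [List.map_cons, List.prod_cons]
    ring

lemma mderiv_mono {n : ℕ} (c : Fin n → ℝ) (p q : Fin n → ℕ) (a : ℝ) :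
    mderiv p (fun x => a * mono c q x) =
      fun x => (a * ∏ j, ((q j).descFactorial (p j) : ℝ)) * mono c (fun j => q j - p j) x := by
  rw [mderiv, foldr_mono c p (List.finRange n) (List.nodup_finRange n) q a]
  have h1 : ∏ j, ((q j).descFactorial (p j) : ℝ)
      = ((List.finRange n).map (fun j => ((q j).descFactorial (p j) : ℝ))).prod := by
    rw [Fin.prod_univ_def]
  rw [h1]
  have h2 : (fun j => if j ∈ List.finRange n then q j - p j else q j) = fun j => q j - p j := by
    funext j; simp [List.mem_finRange]
  rw [h2]

lemma mono_self {n : ℕ} (c : Fin n → ℝ) (r : Fin n → ℕ) :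
    mono c r c = if (∀ j, r j = 0) then 1 else 0 := by
  by_cases h : ∀ j, r j = 0
  · rw [if_pos h, mono]
    apply Finset.prod_eq_one
    intro j _
    rw [h j, pow_zero]
  · rw [if_neg h, mono]
    push_neg at h
    obtain ⟨j, hj⟩ := h
    exact Finset.prod_eq_zero (Finset.mem_univ j)
      (by rw [sub_self, zero_pow hj])

lemma mderiv_mono_self {n : ℕ} (c : Fin n → ℝ) (p q : Fin n → ℕ) (a : ℝ) :
    mderiv p (fun x => a * mono c q x) c =
      if q = p then a * ∏ j, ((p j).factorial : ℝ) else 0 := by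
  rw [mderiv_mono]
  simp only []
  rw [mono_self]
  by_cases h : q = p
  · subst h
    rw [if_pos rfl, if_pos (fun j => Nat.sub_self (q j)), mul_one]
    congr 1
    exact Finset.prod_congr rfl fun j _ => by rw [Nat.descFactorial_self]
  · rw [if_neg h]
    by_cases h2 : ∀ j, p j ≤ q j
    · have h3 : ¬ ∀ j, q j - p j = 0 := by
        intro h4
        apply h
        funext j
        exact le_antisymm (Nat.sub_eq_zero_iff_le.1 (h4 j)) (h2 j)
      rw [if_neg h3, mul_zero]
    · push_neg at h2
      obtain ⟨j, hj⟩ := h2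
      have : ((q j).descFactorial (p j) : ℝ) = 0 := by
        rw [Nat.descFactorial_eq_zero_iff_lt.2 (by omega)]
        simp
      rw [Finset.prod_eq_zero (Finset.mem_univ j) this, mul_zero, zero_mul]

lemma pder_contDiff {n : ℕ} {f : (Fin n → ℝ) → ℝ} (hf : ContDiff ℝ (⊤ : ℕ∞) f)
    (i : Fin n) : ContDiff ℝ (⊤ : ℕ∞) (pder i f) := by
  have h := (hf.fderiv_right (m := (⊤ : ℕ∞)) (by exact_mod_cast le_top)).clm_apply
    (contDiff_const (c := Pi.single i (1 : ℝ)))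
  exact h

lemma pder_iter_contDiff {n : ℕ} {f : (Fin n → ℝ) → ℝ} (hf : ContDiff ℝ (⊤ : ℕ∞) f)
    (i : Fin n) : ∀ k : ℕ, ContDiff ℝ (⊤ : ℕ∞) ((pder i)^[k] f)
  | 0 => hf
  | (k+1) => by
    rw [Function.iterate_succ_apply']
    exact pder_contDiff (pder_iter_contDiff hf i k) i

lemma pder_add {n : ℕ} {f g : (Fin n → ℝ) → ℝ} (hf : Differentiable ℝ f)
    (hg : Differentiable ℝ g) (i : Fin n) :
    pder i (fun x => f x + g x) = fun x => pder i f x + pder i g x := by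
  funext x
  simp only [pder]
  rw [fderiv_fun_add (hf x) (hg x)]
  simp

lemma pder_iter_add {n : ℕ} {f g : (Fin n → ℝ) → ℝ} (hf : ContDiff ℝ (⊤ : ℕ∞) f)
    (hg : ContDiff ℝ (⊤ : ℕ∞) g) (i : Fin n) :
    ∀ k : ℕ, (pder i)^[k] (fun x => f x + g x) =
      fun x => (pder i)^[k] f x + (pder i)^[k] g x
  | 0 => rfl
  | (k+1) => by
    rw [Function.iterate_succ_apply', Function.iterate_succ_apply',
      Function.iterate_succ_apply', pder_iter_add hf hg i k]
    exact pder_add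
      ((pder_iter_contDiff hf i k).differentiable (by simp))
      ((pder_iter_contDiff hg i k).differentiable (by simp)) i

lemma foldr_contDiff {n : ℕ} (p : Fin n → ℕ) :
    ∀ (l : List (Fin n)) (f : (Fin n → ℝ) → ℝ), ContDiff ℝ (⊤ : ℕ∞) f →
      ContDiff ℝ (⊤ : ℕ∞) (l.foldr (fun i g => (pder i)^[p i] g) f)
  | [], f, hf => hf
  | (i :: t), f, hf => by
    rw [List.foldr_cons]
    exact pder_iter_contDiff (foldr_contDiff p t f hf) i (p i)

lemma foldr_add {n : ℕ} (p : Fin n → ℕ) :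
    ∀ (l : List (Fin n)) (f g : (Fin n → ℝ) → ℝ), ContDiff ℝ (⊤ : ℕ∞) f →
      ContDiff ℝ (⊤ : ℕ∞) g →
      l.foldr (fun i h => (pder i)^[p i] h) (fun x => f x + g x) =
        fun x => l.foldr (fun i h => (pder i)^[p i] h) f x +
          l.foldr (fun i h => (pder i)^[p i] h) g x
  | [], f, g, hf, hg => rfl
  | (i :: t), f, g, hf, hg => by
    simp only [List.foldr_cons]
    rw [foldr_add p t f g hf hg]
    exact pder_iter_add (foldr_contDiff p t f hf) (foldr_contDiff p t g hg) i (p i)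

lemma mderiv_add {n : ℕ} (p : Fin n → ℕ) {f g : (Fin n → ℝ) → ℝ}
    (hf : ContDiff ℝ (⊤ : ℕ∞) f) (hg : ContDiff ℝ (⊤ : ℕ∞) g) :
    mderiv p (fun x => f x + g x) = fun x => mderiv p f x + mderiv p g x :=
  foldr_add p (List.finRange n) f g hf hg

lemma mderiv_zero {n : ℕ} (p : Fin n → ℕ) :
    mderiv p (fun _ : Fin n → ℝ => (0 : ℝ)) = fun _ => 0 := by
  have h := mderiv_mono (fun _ => (0 : ℝ)) p (fun _ => 0) 0
  simpa using h

lemma mderiv_sum {n : ℕ} (p : Fin n → ℕ) {ι : Type*} [DecidableEq ι] (s : Finset ι)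
    (f : ι → (Fin n → ℝ) → ℝ) (hf : ∀ i, ContDiff ℝ (⊤ : ℕ∞) (f i)) :
    mderiv p (fun x => ∑ i ∈ s, f i x) = fun x => ∑ i ∈ s, mderiv p (f i) x := by
  induction s using Finset.induction_on with
  | empty => simpa using mderiv_zero p
  | insert a s hnot ih =>
    have h1 : (fun x => ∑ i ∈ insert a s, f i x)
        = fun x => f a x + ∑ i ∈ s, f i x := by
      funext x; rw [Finset.sum_insert hnot]
    rw [h1, mderiv_add p (hf a) (ContDiff.sum fun i _ => hf i), ih]
    funext x
    rw [Finset.sum_insert hnot]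

lemma pder_congr {n : ℕ} {f g : (Fin n → ℝ) → ℝ} {x : Fin n → ℝ}
    (h : f =ᶠ[nhds x] g) (i : Fin n) : pder i f =ᶠ[nhds x] pder i g := by
  filter_upwards [h.fderiv (𝕜 := ℝ)] with y hy
  simp only [pder, hy]

lemma pder_iter_congr {n : ℕ} {f g : (Fin n → ℝ) → ℝ} {x : Fin n → ℝ}
    (h : f =ᶠ[nhds x] g) (i : Fin n) :
    ∀ k : ℕ, (pder i)^[k] f =ᶠ[nhds x] (pder i)^[k] g
  | 0 => h
  | (k+1) => by
    rw [Function.iterate_succ_apply', Function.iterate_succ_apply']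
    exact pder_congr (pder_iter_congr h i k) i

lemma foldr_congr {n : ℕ} (p : Fin n → ℕ) {x : Fin n → ℝ} :
    ∀ (l : List (Fin n)) {f g : (Fin n → ℝ) → ℝ}, f =ᶠ[nhds x] g →
      l.foldr (fun i h => (pder i)^[p i] h) f =ᶠ[nhds x]
        l.foldr (fun i h => (pder i)^[p i] h) g
  | [], f, g, h => h
  | (i :: t), f, g, h => by
    simp only [List.foldr_cons]
    exact pder_iter_congr (foldr_congr p t h) i (p i)

lemma mderiv_congr {n : ℕ} (p : Fin n → ℕ) {f g : (Fin n → ℝ) → ℝ} {x : Fin n → ℝ}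
    (h : f =ᶠ[nhds x] g) : mderiv p f x = mderiv p g x :=
  (foldr_congr p (List.finRange n) h).self_of_nhds

lemma exists_sep {E : Type*} [MetricSpace E] (A : Finset E) :
    ∃ r > (0 : ℝ), ∀ y ∈ A, ∀ z ∈ A, y ≠ z → 3 * r ≤ dist y z := by
  classical
  set s := (A ×ˢ A).filter (fun p : E × E => p.1 ≠ p.2) with hs
  rcases eq_or_ne s ∅ with h | h
  · refine ⟨1, one_pos, fun y hy z hz hne => ?_⟩
    exfalso
    have : (y, z) ∈ s := by
      rw [hs]; exact Finset.mem_filter.2 ⟨Finset.mk_mem_product hy hz, hne⟩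
    rw [h] at this
    exact absurd this (Finset.notMem_empty _)
  · have hne : (s.image (fun p : E × E => dist p.1 p.2)).Nonempty :=
      (Finset.image_nonempty).2 (Finset.nonempty_of_ne_empty h)
    set d := (s.image (fun p : E × E => dist p.1 p.2)).min' hne with hd
    have hdpos : 0 < d := by
      obtain ⟨q, hq, hqe⟩ := Finset.mem_image.1 ((s.image _).min'_mem hne)
      rw [hd, ← hqe]
      exact dist_pos.2 (Finset.mem_filter.1 hq).2
    refine ⟨d / 3, by linarith, fun y hy z hz hne' => ?_⟩
    have hmem : dist y z ∈ s.image (fun p : E × E => dist p.1 p.2) :=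
      Finset.mem_image.2 ⟨(y, z), Finset.mem_filter.2 ⟨Finset.mk_mem_product hy hz, hne'⟩, rfl⟩
    have := Finset.min'_le _ _ hmem
    linarith

/-- The nonlinear partial differential operator `T(x,D)` associated to `F`, where
`e : Fin M → (Fin n → ℕ)` enumerates the multi-indices `p` with `|p| ≤ m`:
`T(x,D)U(x) = F(x, (D^p U(x))_{|p| ≤ m})`. -/
noncomputable def TOp {n M : ℕ} (e : Fin M → (Fin n → ℕ))
    (F : (Fin n → ℝ) → (Fin M → ℝ) → ℝ) (U : (Fin n → ℝ) → ℝ) : (Fin n → ℝ) → ℝ :=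
  fun x => F x (fun i => mderiv (e i) U x)

/-- **Corollary 1.** Let `X ⊆ ℝⁿ` be a nonempty open set, `F` jointly continuous and
`f` continuous with `f(x) ∈ int R_x` for all `x ∈ X`. Then for every `x ∈ X` there is
`δ > 0` such that for every finite `A ⊆ X ∩ B(x,δ)` there is `U ∈ C^∞(X)` with
`T(y,D)U(y) = f(y)` for all `y ∈ A`. -/
theorem exact_solution_on_finite_sets
    {n m M : ℕ} (X : Set (Fin n → ℝ)) (hXopen : IsOpen X) (hXne : X.Nonempty)
    (e : Fin M → (Fin n → ℕ)) (he : Function.Injective e)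
    (hrange : ∀ p : Fin n → ℕ, (∑ i, p i) ≤ m ↔ p ∈ Set.range e)
    (F : (Fin n → ℝ) → (Fin M → ℝ) → ℝ)
    (hF : ContinuousOn (fun q : (Fin n → ℝ) × (Fin M → ℝ) => F q.1 q.2) (X ×ˢ Set.univ))
    (f : (Fin n → ℝ) → ℝ) (hf : ContinuousOn f X)
    (hrc : ∀ x ∈ X, f x ∈ interior (Set.range (F x))) :
    ∀ x ∈ X, ∃ δ > (0 : ℝ), ∀ A : Finset (Fin n → ℝ),
      (A : Set (Fin n → ℝ)) ⊆ X ∩ Metric.ball x δ →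
      ∃ U : (Fin n → ℝ) → ℝ, ContDiffOn ℝ (⊤ : ℕ∞) U X ∧
        ∀ y ∈ A, TOp e F U y = f y := by
  classical
  intro x hx
  refine ⟨1, one_pos, ?_⟩
  intro A hA
  have hsel : ∀ y : Fin n → ℝ, ∃ ξ : Fin M → ℝ, y ∈ A → F y ξ = f y := by
    intro y
    by_cases hy : y ∈ A
    · obtain ⟨hyX, _⟩ := hA hy
      obtain ⟨ξ, hξ⟩ := interior_subset (hrc y hyX)
      exact ⟨ξ, fun _ => hξ⟩
    · exact ⟨0, fun h => absurd h hy⟩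
  choose ξ hξ using hsel
  have hPsmooth : ∀ y : Fin n → ℝ, ContDiff ℝ (⊤ : ℕ∞)
      (fun z => ∑ i : Fin M, (ξ y i / ∏ j, ((e i j).factorial : ℝ)) * mono y (e i) z) :=
    fun y => ContDiff.sum fun i _ => contDiff_const.mul (mono_contDiff y (e i))
  have hPder : ∀ (y : Fin n → ℝ) (k : Fin M),
      mderiv (e k) (fun z => ∑ i : Fin M,
        (ξ y i / ∏ j, ((e i j).factorial : ℝ)) * mono y (e i) z) y = ξ y k := by
    intro y k
    rw [mderiv_sum (e k) Finset.univ
      (fun i => fun z => (ξ y i / ∏ j, ((e i j).factorial : ℝ)) * mono y (e i) z)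
      (fun i => contDiff_const.mul (mono_contDiff y (e i)))]
    beta_reduce
    rw [Finset.sum_eq_single k]
    · rw [mderiv_mono_self, if_pos rfl]
      have hpos : (0 : ℝ) < ∏ j, ((e k j).factorial : ℝ) :=
        Finset.prod_pos fun j _ => by exact_mod_cast (e k j).factorial_pos
      field_simp
    · intro i _ hik
      rw [mderiv_mono_self, if_neg (fun hcon => hik (he hcon))]
    · simp
  obtain ⟨r, hr, hsep⟩ := exists_sep A
  have hb : ∀ y : Fin n → ℝ, ∃ b : ContDiffBump y, b.rIn = r ∧ b.rOut = 2 * r :=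
    fun y => ⟨⟨r, 2 * r, hr, by linarith⟩, rfl, rfl⟩
  choose b hbIn hbOut using hb
  refine ⟨fun z => ∑ y ∈ A, (b y) z *
    ∑ i : Fin M, (ξ y i / ∏ j, ((e i j).factorial : ℝ)) * mono y (e i) z, ?_, ?_⟩
  · exact (ContDiff.sum fun y _ => ((b y).contDiff).mul (hPsmooth y)).contDiffOn
  · intro y hy
    have hloc : (fun z => ∑ w ∈ A, (b w) z *
        ∑ i : Fin M, (ξ w i / ∏ j, ((e i j).factorial : ℝ)) * mono w (e i) z) =ᶠ[nhds y]
        (fun z => ∑ i : Fin M, (ξ y i / ∏ j, ((e i j).factorial : ℝ)) * mono y (e i) z) := by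
      filter_upwards [Metric.ball_mem_nhds y hr] with z hz
      rw [Finset.sum_eq_single_of_mem y hy]
      · rw [(b y).one_of_mem_closedBall, one_mul]
        rw [Metric.mem_closedBall, hbIn]
        exact le_of_lt (Metric.mem_ball.1 hz)
      · intro w hw hwy
        rw [(b w).zero_of_le_dist, zero_mul]
        rw [hbOut]
        have h3 := hsep y hy w hw (Ne.symm hwy)
        have h4 := Metric.mem_ball.1 hz
        have h5 := dist_triangle y z w
        have h6 : dist y z = dist z y := dist_comm y z
        have h7 : dist z w = dist y w - dist y z + (dist z w - (dist y w - dist y z)) := by ring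
        have h8 := abs_dist_sub_le y w z
        -- dist z w ≥ dist y w - dist y z ≥ 3r - r = 2r
        have h9 : dist y w - dist z y ≤ dist z w := by
          have := dist_triangle y z w
          linarith [dist_comm y z ▸ this]
        linarith
    unfold TOp
    have harg : (fun i => mderiv (e i) (fun z => ∑ w ∈ A, (b w) z *
        ∑ i : Fin M, (ξ w i / ∏ j, ((e i j).factorial : ℝ)) * mono w (e i) z) y) = ξ y := by
      funext i
      rw [mderiv_congr (e i) hloc, hPder]
    rw [harg]
    exact hξ y hy
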